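/- Let ℓ be an integer greater than 1 and let C be a code of length 2ℓ over an alphabet of size q ≥ 2. Suppose that the difference of any two distinct codewords of C is not an ℓ-burst (so C has a decoder that detects any single ℓ-burst error) and that C has an (ℓ,ℓ)-burst list decoder. Then |C| < ℓ · q^{ℓ−1}. -/

import Mathlib

/-- A word `e ∈ F^n` is a `τ`-burst if its support is contained in `τ`
consecutive positions (equivalently, `e = 0` or the first and last nonzero
indexes `i ≤ j` satisfy `j - i < τ`). -/
def IsBurst {F : Type*} [Zero F] {n : ℕ} (τ : ℕ) (e : Fin n → F) : Prop :=
  ∃ a : ℕ, ∀ j : Fin n, e j ≠ 0 → a ≤ (j : ℕ) ∧ (j : ℕ) < a + τ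

/-- A decoder `D` (returning lists, i.e. finite sets, of codewords) corrects any
single `τ`-burst error. -/
def Corrects {F : Type*} [AddCommGroup F] {n : ℕ}
    (D : (Fin n → F) → Finset (Fin n → F)) (C : Set (Fin n → F)) (τ : ℕ) : Prop :=
  ∀ c ∈ C, ∀ e : Fin n → F, IsBurst τ e → c ∈ D (c + e)

/-- A decoder `D` detects any single `τ`-burst error: on input `c + e` it
returns `{c}` if `e = 0` and `∅` otherwise. -/
def Detects {F : Type*} [AddCommGroup F] {n : ℕ}
    (D : (Fin n → F) → Finset (Fin n → F)) (C : Set (Fin n → F)) (τ : ℕ) : Prop :=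
  ∀ c ∈ C, ∀ e : Fin n → F, IsBurst τ e →
    (e = 0 → D (c + e) = {c}) ∧ (e ≠ 0 → D (c + e) = ∅)

/-- `C` has an `(ℓ,τ)`-burst list decoder: a decoder with lists of codewords of
size at most `ℓ` that corrects any single `τ`-burst error. -/
def HasBurstListDecoder {F : Type*} [AddCommGroup F] {n : ℕ}
    (C : Set (Fin n → F)) (ℓ τ : ℕ) : Prop :=
  ∃ D : (Fin n → F) → Finset (Fin n → F),
    (∀ y, (D y : Set (Fin n → F)) ⊆ C) ∧ (∀ y, (D y).card ≤ ℓ) ∧ Corrects D C τ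

/-- `C` has a decoder detecting any single `τ`-burst error. -/
def HasBurstDetector {F : Type*} [AddCommGroup F] {n : ℕ}
    (C : Set (Fin n → F)) (τ : ℕ) : Prop :=
  ∃ D : (Fin n → F) → Finset (Fin n → F),
    (∀ y, (D y : Set (Fin n → F)) ⊆ C) ∧ Detects D C τ

/- ### Auxiliary notions for the proof -/

/-- Two words agree on all coordinates `< k`. -/
def PrefEqA {F : Type*} {n : ℕ} (k : ℕ) (c c' : Fin n → F) : Prop :=
  ∀ j : Fin n, (j : ℕ) < k → c j = c' j

/-- Two words agree on all coordinates `≥ m`. -/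
def SufEqA {F : Type*} {n : ℕ} (m : ℕ) (c c' : Fin n → F) : Prop :=
  ∀ j : Fin n, m ≤ (j : ℕ) → c j = c' j

/-- A "staircase chain" of length `k` in `C`: distinct codewords `e 0, …, e k`
such that `e a` agrees with `e k` on the first `a` coordinates and
consecutive elements agree on coordinates `≥ ℓ + a + 1`. -/
def IsChainA {F : Type*} {n : ℕ} (C : Set (Fin n → F)) (ℓ k : ℕ)
    (e : ℕ → Fin n → F) : Prop :=
  (∀ a, a ≤ k → e a ∈ C) ∧
  (∀ a b, a ≤ k → b ≤ k → a ≠ b → e a ≠ e b) ∧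
  (∀ a, a ≤ k → PrefEqA a (e a) (e k)) ∧
  (∀ a, a < k → SufEqA (ℓ + a + 1) (e a) (e (a + 1)))

/-- There is a chain of length `k` ending at `c`. -/
def HasChainA {F : Type*} {n : ℕ} (C : Set (Fin n → F)) (ℓ k : ℕ)
    (c : Fin n → F) : Prop :=
  ∃ e, IsChainA C ℓ k e ∧ e k = c

/-- Composition of the suffix agreements along a chain. -/
theorem chain_sufeq {F : Type*} {n : ℕ} {C : Set (Fin n → F)} {ℓ k : ℕ}
    {e : ℕ → Fin n → F} (hc : IsChainA C ℓ k e) :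
    ∀ b, b ≤ k → ∀ a, a ≤ b → SufEqA (ℓ + b) (e a) (e b) := by
  intro b
  induction b with
  | zero =>
    intro _ a ha
    have : a = 0 := Nat.le_zero.mp ha
    subst this
    intro j _; rfl
  | succ b ih =>
    intro hb a ha
    rcases Nat.eq_or_lt_of_le ha with h | h
    · subst h; intro j _; rfl
    · have ha' : a ≤ b := Nat.lt_succ_iff.mp h
      have h1 : SufEqA (ℓ + b) (e a) (e b) := ih (Nat.le_of_succ_le hb) a ha'
      have h2 : SufEqA (ℓ + b + 1) (e b) (e (b + 1)) := hc.2.2.2 b hb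
      intro j hj
      have hj' : ℓ + b ≤ (j : ℕ) := by omega
      have hj'' : ℓ + b + 1 ≤ (j : ℕ) := by omega
      rw [h1 j hj', h2 j hj'']

theorem code_size_bound_tau_eq_ell (F : Type*) [AddCommGroup F] [Fintype F]
    (ℓ : ℕ) (hℓ : 1 < ℓ) (hq : 2 ≤ Fintype.card F)
    (C : Set (Fin (2 * ℓ) → F))
    (h2 : ∀ c₁ ∈ C, ∀ c₂ ∈ C, c₁ ≠ c₂ → ¬ IsBurst ℓ (c₁ - c₂))
    (h3 : HasBurstListDecoder C ℓ ℓ) :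
    C.ncard < ℓ * Fintype.card F ^ (ℓ - 1) := by
  classical
  obtain ⟨D, hD1, hD2, hcor⟩ := h3
  -- h2, reformulated
  have pairNE : ∀ c ∈ C, ∀ c' ∈ C, c ≠ c' → ∀ k : ℕ,
      PrefEqA k c c' → SufEqA (ℓ + k) c c' → False := by
    intro c hc c' hc' hne k hp hs
    apply h2 c hc c' hc' hne
    refine ⟨k, fun j hj => ?_⟩
    have hne0 : c j ≠ c' j := by
      intro h; apply hj; simp [Pi.sub_apply, h]
    constructor
    · by_contra h
      exact hne0 (hp j (by omega))
    · by_contra h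
      exact hne0 (hs j (by omega))
  -- no chain of length ℓ
  have noChain : ∀ c : Fin (2 * ℓ) → F, ¬ HasChainA C ℓ ℓ c := by
    rintro c ⟨e, hc, -⟩
    set y : Fin (2 * ℓ) → F := fun j => if (j : ℕ) < ℓ then e ℓ j else e 0 j with hy
    have hmem : ∀ a : ℕ, a ≤ ℓ → e a ∈ D y := by
      intro a ha
      have hburst : IsBurst ℓ (y - e a) := by
        refine ⟨a, fun j hj => ?_⟩
        have hne0 : y j ≠ e a j := by
          intro h; apply hj; simp [Pi.sub_apply, h]
        by_cases hjl : (j : ℕ) < ℓ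
        · have hyj : y j = e ℓ j := by simp [hy, hjl]
          constructor
          · by_contra hlt
            exact hne0 (by rw [hyj, hc.2.2.1 a ha j (by omega)])
          · omega
        · have hyj : y j = e 0 j := by simp [hy, hjl]
          constructor
          · omega
          · by_contra hge
            have hs : SufEqA (ℓ + a) (e 0) (e a) :=
              chain_sufeq hc a ha 0 (Nat.zero_le _)
            exact hne0 (by rw [hyj, hs j (by omega)])
      have h1 := hcor (e a) (hc.1 a ha) (y - e a) hburst
      have heq : e a + (y - e a) = y := by abel
      rwa [heq] at h1
    have hinj : Set.InjOn (fun a : Fin (ℓ + 1) => e a)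
        (Finset.univ : Finset (Fin (ℓ + 1))) := by
      intro a _ b _ hab
      by_contra hne
      have hne' : (a : ℕ) ≠ (b : ℕ) := fun h => hne (Fin.ext h)
      exact hc.2.1 a b (by have := a.isLt; omega) (by have := b.isLt; omega) hne' hab
    have hcard : ℓ + 1 ≤ (D y).card := by
      have hsub : (Finset.univ.image (fun a : Fin (ℓ + 1) => e a)) ⊆ D y := by
        intro x hx
        obtain ⟨a, -, rfl⟩ := Finset.mem_image.mp hx
        exact hmem a (by have := a.isLt; omega)
      calc ℓ + 1 = (Finset.univ : Finset (Fin (ℓ + 1))).card := by simp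
        _ = (Finset.univ.image (fun a : Fin (ℓ + 1) => e a)).card :=
            (Finset.card_image_of_injOn hinj).symm
        _ ≤ (D y).card := Finset.card_le_card hsub
    have := hD2 y
    omega
  -- extension lemma
  have ext : ∀ k : ℕ, ∀ c ∈ C, ∀ c' ∈ C, c ≠ c' → HasChainA C ℓ k c →
      PrefEqA k c c' → SufEqA (ℓ + k + 1) c c' → HasChainA C ℓ (k + 1) c' := by
    intro k c hc c' hc' hne hch0 hp hs
    obtain ⟨e, hch, hek⟩ := hch0
    have hnotin : ∀ a, a ≤ k → e a ≠ c' := by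
      intro a ha habs
      rcases Nat.eq_or_lt_of_le ha with h | h
      · subst h; rw [hek] at habs; exact hne habs
      · have hsk : SufEqA (ℓ + k) (e a) (e k) := chain_sufeq hch k le_rfl a ha
        apply pairNE c hc c' hc' hne k hp
        intro j hj
        rw [← habs, ← hek]
        exact (hsk j hj).symm
    set e' : ℕ → Fin (2 * ℓ) → F := fun a => if a ≤ k then e a else c' with he'
    have he1 : ∀ a, a ≤ k → e' a = e a := by
      intro a ha; simp only [he']; rw [if_pos ha]
    have he2 : e' (k + 1) = c' := by
      simp only [he']; rw [if_neg (by omega : ¬ (k + 1 ≤ k))]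
    refine ⟨e', ⟨?_, ?_, ?_, ?_⟩, he2⟩
    · intro a ha
      by_cases h : a ≤ k
      · rw [he1 a h]; exact hch.1 a h
      · have haa : a = k + 1 := by omega
        rw [haa, he2]; exact hc'
    · intro a b ha hb hab
      by_cases h : a ≤ k <;> by_cases h' : b ≤ k
      · rw [he1 a h, he1 b h']; exact hch.2.1 a b h h' hab
      · have hb1 : b = k + 1 := by omega
        rw [he1 a h, hb1, he2]; exact hnotin a h
      · have ha1 : a = k + 1 := by omega
        rw [he1 b h', ha1, he2]; exact fun hh => hnotin b h' hh.symm
      · omega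
    · intro a ha
      by_cases h : a ≤ k
      · rw [he1 a h, he2]
        intro j hj
        rw [hch.2.2.1 a h j hj, hek, hp j (by omega)]
      · have haa : a = k + 1 := by omega
        rw [haa, he2]
        intro j _; rfl
    · intro a ha
      by_cases h : a < k
      · rw [he1 a (by omega), he1 (a + 1) (by omega)]; exact hch.2.2.2 a h
      · have haa : a = k := by omega
        rw [haa, he1 k le_rfl, he2, hek]
        exact hs
  -- the level function
  set f : (Fin (2 * ℓ) → F) → ℕ :=
    fun c => Nat.findGreatest (fun k => HasChainA C ℓ k c) (ℓ - 1) with hf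
  have hfdef : ∀ c, f c = Nat.findGreatest (fun k => HasChainA C ℓ k c) (ℓ - 1) := by
    intro c; simp only [hf]
  have chain0 : ∀ c ∈ C, HasChainA C ℓ 0 c := by
    intro c hc
    refine ⟨fun _ => c, ⟨?_, ?_, ?_, ?_⟩, rfl⟩
    · intro a _; exact hc
    · intro a b ha hb hab; exact absurd (show a = b by omega) hab
    · intro a ha j hj; rfl
    · intro a ha; exact absurd ha (by omega)
  have hfchain : ∀ c ∈ C, HasChainA C ℓ (f c) c := by
    intro c hc
    rw [hfdef c]
    exact Nat.findGreatest_spec (P := fun k => HasChainA C ℓ k c)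
      (Nat.zero_le _) (chain0 c hc)
  have hfle : ∀ c, f c ≤ ℓ - 1 := by
    intro c; rw [hfdef c]; exact Nat.findGreatest_le _
  -- key injectivity
  have keyInj : ∀ c ∈ C, ∀ c' ∈ C, f c = f c' →
      PrefEqA (f c) c c' → SufEqA (ℓ + f c + 1) c c' → c = c' := by
    intro c hc c' hc' hff hp hs
    by_contra hne
    have hchain' : HasChainA C ℓ (f c + 1) c' :=
      ext (f c) c hc c' hc' hne (hfchain c hc) hp hs
    by_cases h : f c + 1 ≤ ℓ - 1
    · refine absurd hchain'
        (Nat.findGreatest_is_greatest (P := fun k => HasChainA C ℓ k c') ?_ h)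
      rw [← hfdef c']
      omega
    · have hfl : f c + 1 = ℓ := by have := hfle c; omega
      rw [hfl] at hchain'
      exact noChain c' hchain'
  -- the projection maps
  set φ : ℕ → (Fin (2 * ℓ) → F) → (Fin (ℓ - 1) → F) :=
    fun k c i =>
      if (i : ℕ) < k then c ⟨(i : ℕ), by have := i.isLt; omega⟩
      else c ⟨ℓ + 1 + (i : ℕ), by have := i.isLt; omega⟩ with hφ
  have hφpref : ∀ k : ℕ, ∀ c c' : Fin (2 * ℓ) → F, k ≤ ℓ - 1 →
      φ k c = φ k c' → PrefEqA k c c' := by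
    intro k c c' hk heq j hj
    have hj1 : (j : ℕ) < ℓ - 1 := by omega
    have hthis := congrFun heq ⟨(j : ℕ), hj1⟩
    simp only [hφ] at hthis
    rw [if_pos (show ((⟨(j : ℕ), hj1⟩ : Fin (ℓ - 1)) : ℕ) < k from hj),
        if_pos (show ((⟨(j : ℕ), hj1⟩ : Fin (ℓ - 1)) : ℕ) < k from hj)] at hthis
    have hjj : (⟨((⟨(j : ℕ), hj1⟩ : Fin (ℓ - 1)) : ℕ), by have := j.isLt; omega⟩ :
        Fin (2 * ℓ)) = j := Fin.ext rfl
    rwa [hjj] at hthis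
  have hφsuf : ∀ k : ℕ, ∀ c c' : Fin (2 * ℓ) → F, k ≤ ℓ - 1 →
      φ k c = φ k c' → SufEqA (ℓ + k + 1) c c' := by
    intro k c c' hk heq j hj
    have hj2 : (j : ℕ) < 2 * ℓ := j.isLt
    have hi : (j : ℕ) - (ℓ + 1) < ℓ - 1 := by omega
    have hthis := congrFun heq ⟨(j : ℕ) - (ℓ + 1), hi⟩
    simp only [hφ] at hthis
    rw [if_neg (show ¬ ((⟨(j : ℕ) - (ℓ + 1), hi⟩ : Fin (ℓ - 1)) : ℕ) < k by
          show ¬ ((j : ℕ) - (ℓ + 1) < k); omega),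
        if_neg (show ¬ ((⟨(j : ℕ) - (ℓ + 1), hi⟩ : Fin (ℓ - 1)) : ℕ) < k by
          show ¬ ((j : ℕ) - (ℓ + 1) < k); omega)] at hthis
    have hjj : (⟨ℓ + 1 + ((⟨(j : ℕ) - (ℓ + 1), hi⟩ : Fin (ℓ - 1)) : ℕ), by
        have := j.isLt; omega⟩ : Fin (2 * ℓ)) = j := by
      apply Fin.ext
      show ℓ + 1 + ((j : ℕ) - (ℓ + 1)) = (j : ℕ)
      omega
    rwa [hjj] at hthis
  -- φ k is injective on the level set {f = k}
  have hφinj : ∀ k : ℕ, k ≤ ℓ - 1 → ∀ c ∈ C, ∀ c' ∈ C, f c = k → f c' = k →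
      φ k c = φ k c' → c = c' := by
    intro k hk c hc c' hc' hfc hfc' heq
    have hp : PrefEqA k c c' := hφpref k c c' hk heq
    have hs : SufEqA (ℓ + k + 1) c c' := hφsuf k c c' hk heq
    exact keyInj c hc c' hc' (by rw [hfc, hfc']) (hfc ▸ hp) (hfc ▸ hs)
  -- counting
  have hCfin : C.Finite := Set.toFinite C
  set CC : Finset (Fin (2 * ℓ) → F) := hCfin.toFinset with hCC
  have hncard : C.ncard = CC.card := Set.ncard_eq_toFinset_card C hCfin
  have hmemCC : ∀ c, c ∈ CC ↔ c ∈ C := fun c => Set.Finite.mem_toFinset hCfin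
  set M : ℕ := Fintype.card F ^ (ℓ - 1) with hM
  have hMcard : Fintype.card (Fin (ℓ - 1) → F) = M := by
    rw [Fintype.card_fun, Fintype.card_fin]
  have hfib : CC.card = ∑ k ∈ Finset.range ℓ, (CC.filter fun c => f c = k).card := by
    apply Finset.card_eq_sum_card_fiberwise
    intro c _
    have := hfle c
    exact Finset.mem_range.mpr (by omega)
  have hfible : ∀ k ∈ Finset.range ℓ, (CC.filter fun c => f c = k).card ≤ M := by
    intro k hk
    have hk' : k ≤ ℓ - 1 := by have := Finset.mem_range.mp hk; omega
    calc (CC.filter fun c => f c = k).card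
        ≤ (Finset.univ : Finset (Fin (ℓ - 1) → F)).card := by
          apply Finset.card_le_card_of_injOn (φ k)
          · intro a _; exact Finset.mem_univ _
          · intro c hcm c' hcm' heq
            simp only [Finset.coe_filter, Set.mem_setOf_eq] at hcm hcm'
            exact hφinj k hk' c ((hmemCC c).mp hcm.1) c' ((hmemCC c').mp hcm'.1)
              hcm.2 hcm'.2 heq
      _ = M := by rw [Finset.card_univ, hMcard]
  -- suppose the bound fails
  by_contra hge
  push_neg at hge
  rw [hncard, hfib] at hge
  have hall : ∀ k ∈ Finset.range ℓ, (CC.filter fun c => f c = k).card = M := by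
    by_contra hnall
    push_neg at hnall
    obtain ⟨k0, hk0, hk0ne⟩ := hnall
    have hlt : ∑ k ∈ Finset.range ℓ, (CC.filter fun c => f c = k).card
        < ∑ _k ∈ Finset.range ℓ, M := by
      apply Finset.sum_lt_sum hfible
      exact ⟨k0, hk0, lt_of_le_of_ne (hfible k0 hk0) hk0ne⟩
    rw [Finset.sum_const, Finset.card_range, smul_eq_mul] at hlt
    omega
  have hMpos : 0 < M := by
    rw [hM]
    exact pow_pos (by omega) _
  -- get c' with f c' = 1
  have h1mem : (1 : ℕ) ∈ Finset.range ℓ := Finset.mem_range.mpr (by omega)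
  obtain ⟨c', hc'mem⟩ := Finset.card_pos.mp (by rw [hall 1 h1mem]; exact hMpos)
  rw [Finset.mem_filter] at hc'mem
  have hc'C : c' ∈ C := (hmemCC c').mp hc'mem.1
  have hfc' : f c' = 1 := hc'mem.2
  -- φ 0 is surjective from the level-0 set
  have h0mem : (0 : ℕ) ∈ Finset.range ℓ := Finset.mem_range.mpr (by omega)
  have himage : (CC.filter fun c => f c = 0).image (φ 0) = Finset.univ := by
    apply Finset.eq_univ_of_card
    rw [Finset.card_image_of_injOn, hall 0 h0mem, hMcard]
    intro c hcm c'' hcm' heq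
    simp only [Finset.coe_filter, Set.mem_setOf_eq] at hcm hcm'
    exact hφinj 0 (by omega) c ((hmemCC c).mp hcm.1) c'' ((hmemCC c'').mp hcm'.1)
      hcm.2 hcm'.2 heq
  have hin : φ 0 c' ∈ (CC.filter fun c => f c = 0).image (φ 0) := by
    rw [himage]; exact Finset.mem_univ _
  obtain ⟨c, hcm, hceq⟩ := Finset.mem_image.mp hin
  rw [Finset.mem_filter] at hcm
  have hcC : c ∈ C := (hmemCC c).mp hcm.1
  have hfc : f c = 0 := hcm.2
  have hcne : c ≠ c' := by
    intro h; rw [h, hfc'] at hfc; exact absurd hfc (by omega)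
  -- c agrees with c' on coordinates ≥ ℓ + 1
  have hsuf : SufEqA (ℓ + 1) c' c := by
    have := hφsuf 0 c c' (by omega) hceq
    intro j hj
    exact (this j (by omega)).symm
  -- build a chain of length 1 to c, contradicting f c = 0
  have hchain1 : HasChainA C ℓ 1 c := by
    set e : ℕ → Fin (2 * ℓ) → F := fun a => if a = 0 then c' else c with he
    have he0 : e 0 = c' := by simp [he]
    have he1 : e 1 = c := by simp [he]
    refine ⟨e, ⟨?_, ?_, ?_, ?_⟩, he1⟩
    · intro a ha
      by_cases h : a = 0
      · rw [h, he0]; exact hc'C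
      · have haa : a = 1 := by omega
        rw [haa, he1]; exact hcC
    · intro a b ha hb hab
      by_cases h : a = 0 <;> by_cases h' : b = 0
      · omega
      · have hb1 : b = 1 := by omega
        rw [h, he0, hb1, he1]; exact fun hh => hcne hh.symm
      · have ha1 : a = 1 := by omega
        rw [h', he0, ha1, he1]; exact hcne
      · omega
    · intro a ha
      by_cases h : a = 0
      · rw [h]; intro j hj; exact absurd hj (by omega)
      · have haa : a = 1 := by omega
        rw [haa]; intro j hj; rfl
    · intro a ha
      have haa : a = 0 := by omega
      rw [haa, he0, he1]
      intro j hj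
      exact hsuf j (by omega)
  have hge1 : (1 : ℕ) ≤ f c := by
    rw [hfdef c]
    exact Nat.le_findGreatest (by omega) hchain1
  omega
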